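/- Let p be an odd prime, t ≥ 1, and m = p^t + (p^t+1)/2. Then for every integer k with 0 ≤ k ≤ m−1, ν_p(C(2m−k−1, k)) = ν_p(C(2m−2k−2, m−k−1)). -/

import Mathlib

/-- Key pointwise carry lemma: if `q` is odd, `2*x+1 = A`, `2*k + A = 3*N`, and either
`q ∣ 3*N` or `3*N < q`, then the two carry conditions agree. -/
lemma carry_iff_aux {q N k A x : ℕ} (hq : Odd q) (hq1 : 1 < q)
    (hA : 2 * x + 1 = A) (h3N : 2 * k + A = 3 * N)
    (hdvd : q ∣ 3 * N ∨ 3 * N < q) :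
    (q ≤ k % q + A % q ↔ q ≤ x % q + x % q) := by
  obtain ⟨u, hu⟩ := hq
  rcases hdvd with hdvd | hlt
  · -- q divides 3N
    set a := A % q with ha
    set b := k % q with hb
    set c := x % q with hc
    have haq : a < q := Nat.mod_lt _ (by omega)
    have hbq : b < q := Nat.mod_lt _ (by omega)
    have hcq : c < q := Nat.mod_lt _ (by omega)
    have e1 : (2 * b + a) % q = (2 * k + A) % q :=
      Nat.ModEq.add (Nat.ModEq.mul_left 2 (Nat.mod_modEq k q)) (Nat.mod_modEq A q)
    have e2 : (2 * k + A) % q = 0 := by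
      obtain ⟨s, hs⟩ := hdvd
      rw [h3N, hs, Nat.mul_mod_right]
    have h1 : q ∣ 2 * b + a := Nat.dvd_of_mod_eq_zero (e1.trans e2)
    obtain ⟨e, he⟩ := h1
    have he3 : e < 3 := by
      by_contra hcon
      have : q * 3 ≤ q * e := Nat.mul_le_mul_left q (by omega)
      omega
    have e3 : (2 * c + 1) % q = (2 * x + 1) % q :=
      Nat.ModEq.add_right 1 (Nat.ModEq.mul_left 2 (Nat.mod_modEq x q))
    have e4 : (2 * c + 1) % q = a := by rw [e3, hA]
    obtain ⟨d, hd⟩ : ∃ d, 2 * c + 1 = q * d + a :=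
      ⟨(2 * c + 1) / q, by rw [← e4, Nat.div_add_mod]⟩
    have hd2 : d < 2 := by
      by_contra hcon
      have : q * 2 ≤ q * d := Nat.mul_le_mul_left q (by omega)
      omega
    have hE : e = 0 ∨ e = 1 ∨ e = 2 := by omega
    have hD : d = 0 ∨ d = 1 := by omega
    rcases hE with rfl | rfl | rfl <;> rcases hD with rfl | rfl <;> omega
  · have hk : k % q = k := Nat.mod_eq_of_lt (by omega)
    have hA' : A % q = A := Nat.mod_eq_of_lt (by omega)
    have hx : x % q = x := Nat.mod_eq_of_lt (by omega)
    rw [hk, hA', hx]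
    omega

theorem stmt_9 {p t m : ℕ} (hp : p.Prime) (hodd : Odd p) (ht : 1 ≤ t)
    (hm : m = p ^ t + (p ^ t + 1) / 2) :
    ∀ k, k ≤ m - 1 →
      padicValNat p ((2 * m - k - 1).choose k) =
        padicValNat p ((2 * m - 2 * k - 2).choose (m - k - 1)) := by
  intro k hk
  haveI : Fact p.Prime := ⟨hp⟩
  have hp2 : 2 ≤ p := hp.two_le
  have hpodd : p % 2 = 1 := Nat.odd_iff.mp hodd
  have hp3 : 3 ≤ p := by omega
  obtain ⟨w, hw⟩ := hodd.pow (n := t)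
  have hN3 : 3 ≤ p ^ t := le_trans hp3 (Nat.le_self_pow (by omega) p)
  have hm2 : 2 * m = 3 * p ^ t + 1 := by omega
  set N := p ^ t with hNdef
  set n := 2 * m - k - 1 with hn
  set x := m - k - 1 with hx
  set A := n - k with hA
  have h2x : 2 * m - 2 * k - 2 = 2 * x := by omega
  have hAx : 2 * x + 1 = A := by omega
  have h3N : 2 * k + A = 3 * N := by omega
  have hkn : k ≤ n := by omega
  have hx2x : x ≤ 2 * x := by omega
  have hb1 : Nat.log p n < 2 * m := lt_of_le_of_lt (Nat.log_le_self _ _) (by omega)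
  have hb2 : Nat.log p (2 * x) < 2 * m := lt_of_le_of_lt (Nat.log_le_self _ _) (by omega)
  have h1 := hp.emultiplicity_choose (n := n) (k := k) (b := 2 * m) hkn hb1
  have h2 := hp.emultiplicity_choose (n := 2 * x) (k := x) (b := 2 * m) hx2x hb2
  have hxx : 2 * x - x = x := by omega
  rw [hxx] at h2
  have hfilter : Finset.filter (fun i => p ^ i ≤ k % p ^ i + A % p ^ i) (Finset.Ico 1 (2 * m))
      = Finset.filter (fun i => p ^ i ≤ x % p ^ i + x % p ^ i) (Finset.Ico 1 (2 * m)) := by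
    apply Finset.filter_congr
    intro i hi
    simp only [Finset.mem_Ico] at hi
    have hqodd : Odd (p ^ i) := hodd.pow
    have hq1 : 1 < p ^ i := Nat.one_lt_pow (by omega) (by omega)
    refine carry_iff_aux hqodd hq1 hAx h3N ?_
    rcases le_or_gt i t with h | h
    · exact Or.inl ((pow_dvd_pow p h).mul_left 3)
    · by_cases hp3' : p = 3
      · subst hp3'
        rcases le_or_gt i (t + 1) with h' | h'
        · left
          have : 3 * 3 ^ t = 3 ^ (t + 1) := by ring
          rw [hNdef, this]
          exact pow_dvd_pow 3 h'
        · right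
          have h5 : 3 ^ (t + 2) ≤ 3 ^ i := Nat.pow_le_pow_right (by omega) (by omega)
          have : 3 ^ (t + 2) = 9 * 3 ^ t := by ring
          omega
      · right
        have hp5 : 5 ≤ p := by omega
        have h5 : p ^ (t + 1) ≤ p ^ i := Nat.pow_le_pow_right (by omega) (by omega)
        have hps : p ^ (t + 1) = p * p ^ t := by ring
        have : 5 * p ^ t ≤ p * p ^ t := Nat.mul_le_mul_right _ hp5
        omega
  rw [hfilter] at h1
  have hc1 : 0 < n.choose k := Nat.choose_pos hkn
  have hc2 : 0 < (2 * x).choose x := Nat.choose_pos hx2x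
  have hfin : (padicValNat p (n.choose k) : ℕ∞) = (padicValNat p ((2 * x).choose x) : ℕ∞) := by
    rw [padicValNat_eq_emultiplicity hc1.ne', padicValNat_eq_emultiplicity hc2.ne', h1, h2]
  rw [h2x]
  exact_mod_cast hfin
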